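/- Let (X, Y₁, Y₂, Z, p_{Y₁,Y₂,Z|X}) be a discrete memoryless WTBC and let (R₁,R₂) be an achievable rate pair with corresponding codes {c_n = (f_n, φ₁^{(n)}, φ₂^{(n)})}, γ > 0 and PMF q_Z on Z satisfying ‖P^{(c_n)}_{M₁,M₂,M̂₁,M̂₂,Z^n} − p^U_{M₁×M₂} 1{(M̂₁,M̂₂)=(M₁,M₂)} q_Z^n‖_TV ≤ e^{−nγ} for all large n. Define g_n = P^{(c_n)}_{X^n|Z^n,M₁,M₂} and ψ_j^{(n)} = φ_j^{(n)} (j=1,2). Then: (1) b_n = (g_n, ψ₁^{(n)}, ψ₂^{(n)}) is an (n,R₁,R₂)-code for the GPBC (Z, X, Y₁, Y₂, q_Z, p_{Y₁,Y₂|X,Z}); (2) the induced joint PMF Q^{(b_n)} satisfies ‖P^{(c_n)} − Q^{(b_n)}‖_TV ≤ e^{−nγ} for all sufficiently large n; and (3) P_e(b_n) = ℙ_{Q^{(b_n)}}((M̂₁,M̂₂) ≠ (M₁,M₂)) → 0, so (R₁,R₂) is achievable for that GPBC. -/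

import Mathlib

open scoped BigOperators Classical

noncomputable section

/-- Total variation distance between two PMFs on a finite set. -/
def tvDist {Ω : Type*} [Fintype Ω] (p q : Ω → ℝ) : ℝ :=
  (1 / 2) * ∑ x, |p x - q x|

/-- `p` is a probability mass function on the finite set `Ω`. -/
def IsPMF {Ω : Type*} [Fintype Ω] (p : Ω → ℝ) : Prop := (∀ x, 0 ≤ p x) ∧ ∑ x, p x = 1

/-- The message set `[1 : 2^{nR}]`, modelled as `Fin ⌈2^{nR}⌉`. -/
abbrev Msg (n : ℕ) (R : ℝ) : Type := Fin ⌈(2 : ℝ) ^ ((n : ℝ) * R)⌉₊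

/-- An `(n,R₁,R₂)`-code for a WTBC: a stochastic encoder `f_n : M₁ × M₂ → P(Xⁿ)` (data
`enc`, kernel property via `WTBCCode.valid`) and decoders `φⱼ : Yⱼⁿ → Mⱼ`. -/
structure WTBCCode (X Y1 Y2 Z : Type) [Fintype X] [Fintype Y1] [Fintype Y2] [Fintype Z]
    (n : ℕ) (R₁ R₂ : ℝ) where
  enc : Msg n R₁ × Msg n R₂ → (Fin n → X) → ℝ
  dec1 : (Fin n → Y1) → Msg n R₁
  dec2 : (Fin n → Y2) → Msg n R₂

/-- An `(n,R₁,R₂)`-code for a GPBC: a stochastic encoder `g_n : Zⁿ × M₁ × M₂ → P(Xⁿ)`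
(data `enc`, kernel property via `GPBCCode.valid`) and decoders `ψⱼ : Yⱼⁿ → Mⱼ`. -/
structure GPBCCode (Z X Y1 Y2 : Type) [Fintype Z] [Fintype X] [Fintype Y1] [Fintype Y2]
    (n : ℕ) (R₁ R₂ : ℝ) where
  enc : (Fin n → Z) → Msg n R₁ × Msg n R₂ → (Fin n → X) → ℝ
  dec1 : (Fin n → Y1) → Msg n R₁
  dec2 : (Fin n → Y2) → Msg n R₂

variable {X Y1 Y2 Z : Type} [Fintype X] [Fintype Y1] [Fintype Y2] [Fintype Z]
  {n : ℕ} {R₁ R₂ : ℝ}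

/-- The encoder of a WTBC code is an honest stochastic map. -/
def WTBCCode.valid (c : WTBCCode X Y1 Y2 Z n R₁ R₂) : Prop := ∀ m, IsPMF (c.enc m)

/-- The encoder of a GPBC code is an honest stochastic map. -/
def GPBCCode.valid (b : GPBCCode Z X Y1 Y2 n R₁ R₂) : Prop := ∀ z m, IsPMF (b.enc z m)

/-- The joint PMF `P^{(c_n)}` on `(M₁×M₂) × Xⁿ × Y₁ⁿ × Y₂ⁿ × Zⁿ × (M̂₁×M̂₂)` induced by an
`(n,R₁,R₂)`-code `c` over the memoryless WTBC with transition kernel `W = p_{Y₁,Y₂,Z|X}`. -/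
def WTBCCode.joint (W : X → Y1 × Y2 × Z → ℝ) (c : WTBCCode X Y1 Y2 Z n R₁ R₂) :
    (Msg n R₁ × Msg n R₂) × (Fin n → X) × (Fin n → Y1) × (Fin n → Y2) × (Fin n → Z) ×
      (Msg n R₁ × Msg n R₂) → ℝ := fun ω =>
  (((Fintype.card (Msg n R₁) : ℝ) * (Fintype.card (Msg n R₂) : ℝ))⁻¹)
    * c.enc ω.1 ω.2.1
    * (∏ i, W (ω.2.1 i) (ω.2.2.1 i, ω.2.2.2.1 i, ω.2.2.2.2.1 i))
    * (if c.dec1 ω.2.2.1 = ω.2.2.2.2.2.1 ∧ c.dec2 ω.2.2.2.1 = ω.2.2.2.2.2.2 then 1 else 0)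

/-- The marginal `P^{(c_n)}_{M₁,M₂,Zⁿ,M̂₁,M̂₂}` of the induced joint PMF. -/
def WTBCCode.margMZM (W : X → Y1 × Y2 × Z → ℝ) (c : WTBCCode X Y1 Y2 Z n R₁ R₂) :
    (Msg n R₁ × Msg n R₂) × (Fin n → Z) × (Msg n R₁ × Msg n R₂) → ℝ := fun ω =>
  ∑ x, ∑ y1, ∑ y2, c.joint W (ω.1, x, y1, y2, ω.2.1, ω.2.2)

/-- The marginal `P^{(c_n)}_{M₁,M₂,Xⁿ,Zⁿ}` of the induced joint PMF. -/
def WTBCCode.margMXZ (W : X → Y1 × Y2 × Z → ℝ) (c : WTBCCode X Y1 Y2 Z n R₁ R₂) :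
    (Msg n R₁ × Msg n R₂) × (Fin n → X) × (Fin n → Z) → ℝ := fun ω =>
  ∑ y1, ∑ y2, ∑ mh, c.joint W (ω.1, ω.2.1, y1, y2, ω.2.2, mh)

/-- The target measure `p^U_{M₁×M₂} · 1{(M̂₁,M̂₂)=(M₁,M₂)} · q_Z^n`. -/
def targetMZM (qZ : Z → ℝ) (n : ℕ) (R₁ R₂ : ℝ) :
    (Msg n R₁ × Msg n R₂) × (Fin n → Z) × (Msg n R₁ × Msg n R₂) → ℝ := fun ω =>
  (((Fintype.card (Msg n R₁) : ℝ) * (Fintype.card (Msg n R₂) : ℝ))⁻¹)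
    * (if ω.2.2 = ω.1 then 1 else 0) * ∏ i, qZ (ω.2.1 i)

/-- The conditional marginal `p_{Y₁,Y₂|X,Z}` of the WTBC transition kernel `p_{Y₁,Y₂,Z|X}`
(defined arbitrarily — uniform — where `p_{Z|X}(z|x) = 0`). -/
def condY12givenXZ (W : X → Y1 × Y2 × Z → ℝ) : X → Z → Y1 × Y2 → ℝ := fun x z y =>
  if 0 < ∑ y' : Y1 × Y2, W x (y'.1, y'.2, z)
  then W x (y.1, y.2, z) / ∑ y' : Y1 × Y2, W x (y'.1, y'.2, z)
  else ((Fintype.card Y1 : ℝ) * (Fintype.card Y2 : ℝ))⁻¹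

/-- The stochastic GPBC encoder `g_n = P^{(c_n)}_{Xⁿ|Zⁿ,M₁,M₂}` obtained from a WTBC code
`c` by conditioning its induced joint PMF on `(Zⁿ, M₁, M₂)` (defined arbitrarily — uniform
— where `P^{(c_n)}_{M₁,M₂,Zⁿ} = 0`). -/
def inducedGPBCEnc (W : X → Y1 × Y2 × Z → ℝ) (c : WTBCCode X Y1 Y2 Z n R₁ R₂) :
    (Fin n → Z) → Msg n R₁ × Msg n R₂ → (Fin n → X) → ℝ := fun z m x =>
  if 0 < ∑ x', c.margMXZ W (m, x', z)
  then c.margMXZ W (m, x, z) / ∑ x', c.margMXZ W (m, x', z)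
  else (Fintype.card (Fin n → X) : ℝ)⁻¹

/-- The GPBC code `b_n = (g_n, ψ₁, ψ₂)` induced by a WTBC code `c_n = (f_n, φ₁, φ₂)`:
`g_n = P^{(c_n)}_{Xⁿ|Zⁿ,M₁,M₂}` and `ψⱼ = φⱼ`. -/
def WTBCCode.toGPBC (W : X → Y1 × Y2 × Z → ℝ) (c : WTBCCode X Y1 Y2 Z n R₁ R₂) :
    GPBCCode Z X Y1 Y2 n R₁ R₂ where
  enc := inducedGPBCEnc W c
  dec1 := c.dec1
  dec2 := c.dec2

/-- The joint PMF `Q^{(b_n)}` induced by an `(n,R₁,R₂)`-GPBC code `b` over the GPBC with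
state PMF `q_Z` and transition kernel `Wg = q_{Y₁,Y₂|X,Z}`, recorded on the sample space
`(M₁×M₂) × Xⁿ × Y₁ⁿ × Y₂ⁿ × Zⁿ × (M̂₁×M̂₂)` (same ordering as `WTBCCode.joint`, so that
the two induced distributions can be compared). -/
def GPBCCode.joint (qZ : Z → ℝ) (Wg : X → Z → Y1 × Y2 → ℝ)
    (b : GPBCCode Z X Y1 Y2 n R₁ R₂) :
    (Msg n R₁ × Msg n R₂) × (Fin n → X) × (Fin n → Y1) × (Fin n → Y2) × (Fin n → Z) ×
      (Msg n R₁ × Msg n R₂) → ℝ := fun ω =>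
  (∏ i, qZ (ω.2.2.2.2.1 i))
    * (((Fintype.card (Msg n R₁) : ℝ) * (Fintype.card (Msg n R₂) : ℝ))⁻¹)
    * b.enc ω.2.2.2.2.1 ω.1 ω.2.1
    * (∏ i, Wg (ω.2.1 i) (ω.2.2.2.2.1 i) (ω.2.2.1 i, ω.2.2.2.1 i))
    * (if b.dec1 ω.2.2.1 = ω.2.2.2.2.2.1 ∧ b.dec2 ω.2.2.2.1 = ω.2.2.2.2.2.2 then 1 else 0)

/-- The error probability `ℙ_{Q^{(b_n)}}((M̂₁,M̂₂) ≠ (M₁,M₂))` of a GPBC code. -/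
def GPBCCode.errProb (qZ : Z → ℝ) (Wg : X → Z → Y1 × Y2 → ℝ)
    (b : GPBCCode Z X Y1 Y2 n R₁ R₂) : ℝ :=
  ∑ ω : (Msg n R₁ × Msg n R₂) × (Fin n → X) × (Fin n → Y1) × (Fin n → Y2) × (Fin n → Z) ×
      (Msg n R₁ × Msg n R₂),
    if ω.2.2.2.2.2 ≠ ω.1 then b.joint qZ Wg ω else 0

/-! ### Auxiliary lemmas -/

section Aux

lemma msg_pos (n : ℕ) (R : ℝ) : 0 < ⌈(2 : ℝ) ^ ((n : ℝ) * R)⌉₊ :=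
  Nat.ceil_pos.mpr (Real.rpow_pos_of_pos two_pos _)

lemma sum_prod6 {A B C D E F : Type*} [Fintype A] [Fintype B] [Fintype C] [Fintype D]
    [Fintype E] [Fintype F] (f : A × B × C × D × E × F → ℝ) :
    ∑ ω, f ω = ∑ a, ∑ b, ∑ c, ∑ d, ∑ e, ∑ g, f (a, b, c, d, e, g) := by
  rw [Fintype.sum_prod_type]
  refine Finset.sum_congr rfl fun a _ => ?_
  rw [Fintype.sum_prod_type]
  refine Finset.sum_congr rfl fun b _ => ?_
  rw [Fintype.sum_prod_type]
  refine Finset.sum_congr rfl fun c _ => ?_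
  rw [Fintype.sum_prod_type]
  refine Finset.sum_congr rfl fun d _ => ?_
  rw [Fintype.sum_prod_type]

lemma sum_prod3 {A B C : Type*} [Fintype A] [Fintype B] [Fintype C]
    (f : A × B × C → ℝ) :
    ∑ ω, f ω = ∑ a, ∑ b, ∑ c, f (a, b, c) := by
  rw [Fintype.sum_prod_type]
  refine Finset.sum_congr rfl fun a _ => ?_
  rw [Fintype.sum_prod_type]

lemma sum_rot4 {A B C D : Type*} [Fintype A] [Fintype B] [Fintype C] [Fintype D]
    (f : A → B → C → D → ℝ) :
    ∑ a, ∑ b, ∑ c, ∑ d, f a b c d = ∑ d, ∑ a, ∑ b, ∑ c, f a b c d :=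
  calc ∑ a, ∑ b, ∑ c, ∑ d, f a b c d
      = ∑ a, ∑ b, ∑ d, ∑ c, f a b c d :=
        Finset.sum_congr rfl fun a _ => Finset.sum_congr rfl fun b _ => Finset.sum_comm
    _ = ∑ a, ∑ d, ∑ b, ∑ c, f a b c d :=
        Finset.sum_congr rfl fun a _ => Finset.sum_comm
    _ = ∑ d, ∑ a, ∑ b, ∑ c, f a b c d := Finset.sum_comm

lemma sum_rot5 {A B C D E : Type*} [Fintype A] [Fintype B] [Fintype C] [Fintype D]
    [Fintype E] (f : A → B → C → D → E → ℝ) :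
    ∑ a, ∑ b, ∑ c, ∑ d, ∑ e, f a b c d e = ∑ e, ∑ a, ∑ b, ∑ c, ∑ d, f a b c d e :=
  calc ∑ a, ∑ b, ∑ c, ∑ d, ∑ e, f a b c d e
      = ∑ a, ∑ e, ∑ b, ∑ c, ∑ d, f a b c d e :=
        Finset.sum_congr rfl fun a _ => sum_rot4 (fun b c d e => f a b c d e)
    _ = ∑ e, ∑ a, ∑ b, ∑ c, ∑ d, f a b c d e := Finset.sum_comm

lemma two_tv {Ω : Type*} [Fintype Ω] (p q : Ω → ℝ) :
    ∑ x, |p x - q x| = 2 * tvDist p q := by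
  unfold tvDist; ring

lemma ind_sum {n : ℕ} {R₁ R₂ : ℝ} (d1 : Msg n R₁) (d2 : Msg n R₂) :
    ∑ mh : Msg n R₁ × Msg n R₂, (if d1 = mh.1 ∧ d2 = mh.2 then (1 : ℝ) else 0) = 1 := by
  have h : ∀ mh : Msg n R₁ × Msg n R₂,
      (if d1 = mh.1 ∧ d2 = mh.2 then (1 : ℝ) else 0)
        = if mh = (d1, d2) then (1 : ℝ) else 0 := by
    intro mh
    by_cases h : mh = (d1, d2)
    · subst h; simp
    · rw [if_neg h, if_neg]
      intro hc
      exact h (Prod.ext hc.1.symm hc.2.symm)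
  simp_rw [h]
  simp

/-- `p_{Z|X}` derived from `W`. -/
def pZXaux (W : X → Y1 × Y2 × Z → ℝ) : X → Z → ℝ := fun x z =>
  ∑ y' : Y1 × Y2, W x (y'.1, y'.2, z)

variable {W : X → Y1 × Y2 × Z → ℝ}

lemma W_factor (hW : ∀ x, IsPMF (W x)) (x : X) (z : Z) (y : Y1 × Y2) :
    W x (y.1, y.2, z) = pZXaux W x z * condY12givenXZ W x z y := by
  unfold condY12givenXZ pZXaux
  by_cases h : 0 < ∑ y' : Y1 × Y2, W x (y'.1, y'.2, z)
  · rw [if_pos h, mul_comm, div_mul_cancel₀ _ (ne_of_gt h)]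
  · have h0 : ∑ y' : Y1 × Y2, W x (y'.1, y'.2, z) = 0 :=
      le_antisymm (not_lt.mp h) (Finset.sum_nonneg fun _ _ => (hW x).1 _)
    have hy : W x (y.1, y.2, z) = 0 := by
      have := (Finset.sum_eq_zero_iff_of_nonneg
        (fun (y' : Y1 × Y2) _ => (hW x).1 (y'.1, y'.2, z))).mp h0 y (Finset.mem_univ y)
      simpa using this
    rw [if_neg h, h0, hy, zero_mul]

lemma cond_nonneg (hW : ∀ x, IsPMF (W x)) (x : X) (z : Z) (y : Y1 × Y2) :
    0 ≤ condY12givenXZ W x z y := by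
  unfold condY12givenXZ
  split
  · exact div_nonneg ((hW x).1 _) (le_of_lt ‹_›)
  · exact inv_nonneg.mpr (mul_nonneg (Nat.cast_nonneg _) (Nat.cast_nonneg _))

lemma cond_sum_one (hW : ∀ x, IsPMF (W x)) [Nonempty Y1] [Nonempty Y2] (x : X) (z : Z) :
    ∑ y : Y1 × Y2, condY12givenXZ W x z y = 1 := by
  unfold condY12givenXZ
  split
  · rw [← Finset.sum_div, div_self (ne_of_gt ‹_›)]
  · rw [Finset.sum_const, Finset.card_univ, Fintype.card_prod, nsmul_eq_mul, Nat.cast_mul]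
    have h1 : (0 : ℝ) < (Fintype.card Y1 : ℝ) := Nat.cast_pos.mpr Fintype.card_pos
    have h2 : (0 : ℝ) < (Fintype.card Y2 : ℝ) := Nat.cast_pos.mpr Fintype.card_pos
    exact mul_inv_cancel₀ (ne_of_gt (mul_pos h1 h2))

lemma sum_yy {n : ℕ} (F : Fin n → Y1 → Y2 → ℝ) :
    ∑ y1 : Fin n → Y1, ∑ y2 : Fin n → Y2, ∏ i, F i (y1 i) (y2 i)
      = ∏ i, ∑ p : Y1 × Y2, F i p.1 p.2 :=
  calc ∑ y1 : Fin n → Y1, ∑ y2 : Fin n → Y2, ∏ i, F i (y1 i) (y2 i)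
      = ∑ q : (Fin n → Y1) × (Fin n → Y2), ∏ i, F i (q.1 i) (q.2 i) :=
        (Fintype.sum_prod_type
          (f := fun q : (Fin n → Y1) × (Fin n → Y2) => ∏ i, F i (q.1 i) (q.2 i))).symm
    _ = ∑ g : Fin n → Y1 × Y2, ∏ i, F i (g i).1 (g i).2 :=
        Fintype.sum_equiv (Equiv.arrowProdEquivProdArrow (Fin n) (fun _ => Y1) (fun _ => Y2)).symm _ _
          (fun q => rfl)
    _ = ∏ i, ∑ p : Y1 × Y2, F i p.1 p.2 := (Fintype.prod_sum fun i (p : Y1 × Y2) => F i p.1 p.2).symm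

lemma condpow_sum_one {n : ℕ} (hW : ∀ x, IsPMF (W x)) [Nonempty Y1] [Nonempty Y2]
    (x : Fin n → X) (z : Fin n → Z) :
    ∑ y1 : Fin n → Y1, ∑ y2 : Fin n → Y2,
      ∏ i, condY12givenXZ W (x i) (z i) (y1 i, y2 i) = 1 := by
  rw [sum_yy (fun i a b => condY12givenXZ W (x i) (z i) (a, b))]
  refine Finset.prod_eq_one fun i _ => ?_
  calc ∑ p : Y1 × Y2, condY12givenXZ W (x i) (z i) (p.1, p.2)
      = ∑ p : Y1 × Y2, condY12givenXZ W (x i) (z i) p :=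
        Finset.sum_congr rfl fun p _ => by rw [Prod.mk.eta]
    _ = 1 := cond_sum_one hW _ _

lemma joint_nonneg (hW : ∀ x, IsPMF (W x)) {c : WTBCCode X Y1 Y2 Z n R₁ R₂}
    (hc : c.valid) (ω) : 0 ≤ c.joint W ω := by
  unfold WTBCCode.joint
  refine mul_nonneg (mul_nonneg (mul_nonneg ?_ ?_) ?_) ?_
  · exact inv_nonneg.mpr (mul_nonneg (Nat.cast_nonneg _) (Nat.cast_nonneg _))
  · exact (hc ω.1).1 _
  · exact Finset.prod_nonneg fun i _ => (hW _).1 _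
  · split <;> norm_num

lemma margMXZ_nonneg (hW : ∀ x, IsPMF (W x)) {c : WTBCCode X Y1 Y2 Z n R₁ R₂}
    (hc : c.valid) (ω) : 0 ≤ c.margMXZ W ω :=
  Finset.sum_nonneg fun _ _ => Finset.sum_nonneg fun _ _ => Finset.sum_nonneg fun _ _ =>
    joint_nonneg hW hc _

lemma margMZM_nonneg (hW : ∀ x, IsPMF (W x)) {c : WTBCCode X Y1 Y2 Z n R₁ R₂}
    (hc : c.valid) (ω) : 0 ≤ c.margMZM W ω :=
  Finset.sum_nonneg fun _ _ => Finset.sum_nonneg fun _ _ => Finset.sum_nonneg fun _ _ =>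
    joint_nonneg hW hc _

lemma enc_nonneg (hW : ∀ x, IsPMF (W x)) {c : WTBCCode X Y1 Y2 Z n R₁ R₂}
    (hc : c.valid) (z : Fin n → Z) (m : Msg n R₁ × Msg n R₂) (x : Fin n → X) :
    0 ≤ inducedGPBCEnc W c z m x := by
  unfold inducedGPBCEnc
  split
  · exact div_nonneg (margMXZ_nonneg hW hc _) (le_of_lt ‹_›)
  · exact inv_nonneg.mpr (Nat.cast_nonneg _)

lemma margMXZ_eq (hW : ∀ x, IsPMF (W x)) (c : WTBCCode X Y1 Y2 Z n R₁ R₂)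
    (m : Msg n R₁ × Msg n R₂) (x : Fin n → X) (z : Fin n → Z) :
    c.margMXZ W (m, x, z)
      = (((Fintype.card (Msg n R₁) : ℝ) * (Fintype.card (Msg n R₂) : ℝ))⁻¹)
        * c.enc m x * ∏ i, pZXaux W (x i) (z i) := by
  simp only [WTBCCode.margMXZ, WTBCCode.joint]
  calc ∑ y1 : Fin n → Y1, ∑ y2 : Fin n → Y2, ∑ mh : Msg n R₁ × Msg n R₂,
          (((Fintype.card (Msg n R₁) : ℝ) * (Fintype.card (Msg n R₂) : ℝ))⁻¹)
            * c.enc m x * (∏ i, W (x i) (y1 i, y2 i, z i))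
            * (if c.dec1 y1 = mh.1 ∧ c.dec2 y2 = mh.2 then 1 else 0)
      = ∑ y1 : Fin n → Y1, ∑ y2 : Fin n → Y2,
          (((Fintype.card (Msg n R₁) : ℝ) * (Fintype.card (Msg n R₂) : ℝ))⁻¹)
            * c.enc m x * (∏ i, W (x i) (y1 i, y2 i, z i)) := by
        refine Finset.sum_congr rfl fun y1 _ => Finset.sum_congr rfl fun y2 _ => ?_
        rw [← Finset.mul_sum, ind_sum, mul_one]
    _ = (((Fintype.card (Msg n R₁) : ℝ) * (Fintype.card (Msg n R₂) : ℝ))⁻¹) * c.enc m x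
          * ∑ y1 : Fin n → Y1, ∑ y2 : Fin n → Y2, ∏ i, W (x i) (y1 i, y2 i, z i) := by
        simp_rw [← Finset.mul_sum]
    _ = (((Fintype.card (Msg n R₁) : ℝ) * (Fintype.card (Msg n R₂) : ℝ))⁻¹) * c.enc m x
          * ∏ i, ∑ p : Y1 × Y2, W (x i) (p.1, p.2, z i) := by
        rw [sum_yy (fun i a b => W (x i) (a, b, z i))]
    _ = _ := rfl

lemma margMXZ_decomp (hW : ∀ x, IsPMF (W x)) {c : WTBCCode X Y1 Y2 Z n R₁ R₂}
    (hc : c.valid) (m : Msg n R₁ × Msg n R₂) (x : Fin n → X) (z : Fin n → Z) :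
    c.margMXZ W (m, x, z)
      = (∑ x', c.margMXZ W (m, x', z)) * inducedGPBCEnc W c z m x := by
  unfold inducedGPBCEnc
  by_cases h : 0 < ∑ x', c.margMXZ W (m, x', z)
  · rw [if_pos h, mul_comm, div_mul_cancel₀ _ (ne_of_gt h)]
  · have hA : ∑ x', c.margMXZ W (m, x', z) = 0 :=
      le_antisymm (not_lt.mp h) (Finset.sum_nonneg fun _ _ => margMXZ_nonneg hW hc _)
    have hx : c.margMXZ W (m, x, z) = 0 :=
      (Finset.sum_eq_zero_iff_of_nonneg
        (fun x' _ => margMXZ_nonneg hW hc (m, x', z))).mp hA x (Finset.mem_univ x)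
    rw [if_neg h, hx, hA, zero_mul]

lemma joint_decomp (hW : ∀ x, IsPMF (W x)) {c : WTBCCode X Y1 Y2 Z n R₁ R₂}
    (hc : c.valid) (m : Msg n R₁ × Msg n R₂) (x : Fin n → X) (y1 : Fin n → Y1)
    (y2 : Fin n → Y2) (z : Fin n → Z) (mh : Msg n R₁ × Msg n R₂) :
    c.joint W (m, x, y1, y2, z, mh)
      = (∑ x', c.margMXZ W (m, x', z)) * inducedGPBCEnc W c z m x
        * (∏ i, condY12givenXZ W (x i) (z i) (y1 i, y2 i))
        * (if c.dec1 y1 = mh.1 ∧ c.dec2 y2 = mh.2 then 1 else 0) := by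
  have hWp : ∏ i, W (x i) (y1 i, y2 i, z i)
      = (∏ i, pZXaux W (x i) (z i)) * ∏ i, condY12givenXZ W (x i) (z i) (y1 i, y2 i) := by
    rw [← Finset.prod_mul_distrib]
    exact Finset.prod_congr rfl fun i _ => W_factor hW (x i) (z i) (y1 i, y2 i)
  have h1 : c.joint W (m, x, y1, y2, z, mh)
      = c.margMXZ W (m, x, z)
        * (∏ i, condY12givenXZ W (x i) (z i) (y1 i, y2 i))
        * (if c.dec1 y1 = mh.1 ∧ c.dec2 y2 = mh.2 then 1 else 0) := by
    simp only [WTBCCode.joint]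
    rw [margMXZ_eq hW, hWp]
    ring
  rw [h1, margMXZ_decomp hW hc]

lemma collapse_aux {n : ℕ} {R₁ R₂ : ℝ} [Nonempty Y1] [Nonempty Y2]
    (hW : ∀ x, IsPMF (W x))
    (g : (Fin n → Z) → (Fin n → X) → ℝ) (hg : ∀ z, ∑ x, g z x = 1)
    (D : (Fin n → Z) → ℝ) (d1 : (Fin n → Y1) → Msg n R₁) (d2 : (Fin n → Y2) → Msg n R₂) :
    ∑ x : Fin n → X, ∑ y1 : Fin n → Y1, ∑ y2 : Fin n → Y2, ∑ z : Fin n → Z,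
      ∑ mh : Msg n R₁ × Msg n R₂,
        D z * g z x * (∏ i, condY12givenXZ W (x i) (z i) (y1 i, y2 i))
          * (if d1 y1 = mh.1 ∧ d2 y2 = mh.2 then (1 : ℝ) else 0)
      = ∑ z, D z := by
  calc ∑ x : Fin n → X, ∑ y1 : Fin n → Y1, ∑ y2 : Fin n → Y2, ∑ z : Fin n → Z,
      ∑ mh : Msg n R₁ × Msg n R₂,
        D z * g z x * (∏ i, condY12givenXZ W (x i) (z i) (y1 i, y2 i))
          * (if d1 y1 = mh.1 ∧ d2 y2 = mh.2 then (1 : ℝ) else 0)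
      = ∑ x : Fin n → X, ∑ y1 : Fin n → Y1, ∑ y2 : Fin n → Y2, ∑ z : Fin n → Z,
          D z * g z x * (∏ i, condY12givenXZ W (x i) (z i) (y1 i, y2 i)) := by
        refine Finset.sum_congr rfl fun x _ => Finset.sum_congr rfl fun y1 _ =>
          Finset.sum_congr rfl fun y2 _ => Finset.sum_congr rfl fun z _ => ?_
        rw [← Finset.mul_sum, ind_sum, mul_one]
    _ = ∑ z : Fin n → Z, ∑ x : Fin n → X, ∑ y1 : Fin n → Y1, ∑ y2 : Fin n → Y2,
          D z * g z x * (∏ i, condY12givenXZ W (x i) (z i) (y1 i, y2 i)) :=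
        sum_rot4 (fun (x : Fin n → X) (y1 : Fin n → Y1) (y2 : Fin n → Y2) (z : Fin n → Z) =>
          D z * g z x * (∏ i, condY12givenXZ W (x i) (z i) (y1 i, y2 i)))
    _ = ∑ z : Fin n → Z, ∑ x : Fin n → X, D z * g z x := by
        refine Finset.sum_congr rfl fun z _ => Finset.sum_congr rfl fun x _ => ?_
        simp_rw [← Finset.mul_sum]
        rw [condpow_sum_one hW, mul_one]
    _ = ∑ z, D z := by
        refine Finset.sum_congr rfl fun z _ => ?_
        rw [← Finset.mul_sum, hg z, mul_one]

lemma A_eq_sum_margMZM (c : WTBCCode X Y1 Y2 Z n R₁ R₂)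
    (m : Msg n R₁ × Msg n R₂) (z : Fin n → Z) :
    ∑ x', c.margMXZ W (m, x', z) = ∑ mh, c.margMZM W (m, z, mh) := by
  simp only [WTBCCode.margMXZ, WTBCCode.margMZM]
  exact sum_rot4 fun x y1 y2 mh => c.joint W (m, x, y1, y2, z, mh)

lemma target_sum (qZ : Z → ℝ) (m : Msg n R₁ × Msg n R₂) (z : Fin n → Z) :
    ∑ mh, targetMZM qZ n R₁ R₂ (m, z, mh)
      = (∏ i, qZ (z i))
        * (((Fintype.card (Msg n R₁) : ℝ) * (Fintype.card (Msg n R₂) : ℝ))⁻¹) := by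
  simp only [targetMZM]
  rw [Finset.sum_eq_single m]
  · rw [if_pos rfl]; ring
  · intro mh _ hne
    rw [if_neg hne]; ring
  · intro hm; exact absurd (Finset.mem_univ m) hm

end Aux

/-- **Good WTBC codes induce good GPBC codes (Proposition 3).**
Suppose `(R₁,R₂)` is achievable for the WTBC `p_{Y₁,Y₂,Z|X}` via codes `c_n`, `γ > 0` and a
PMF `q_Z` with `‖P^{(c_n)}_{M₁,M₂,M̂₁,M̂₂,Zⁿ} − p^U 1{(M̂₁,M̂₂)=(M₁,M₂)} q_Z^n‖_TV ≤ e^{−nγ}`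
for all large `n`.  Define `g_n = P^{(c_n)}_{Xⁿ|Zⁿ,M₁,M₂}` and `ψⱼ = φⱼ`.  Then:
(1) `b_n = (g_n, ψ₁, ψ₂)` is an `(n,R₁,R₂)`-code for the GPBC `(q_Z, p_{Y₁,Y₂|X,Z})`;
(2) `‖P^{(c_n)} − Q^{(b_n)}‖_TV ≤ e^{−nγ}` for all sufficiently large `n`;
(3) `P_e(b_n) → 0`, i.e. `(R₁,R₂)` is achievable for that GPBC. -/
theorem good_WTBC_codes_induce_good_GPBC_codes
    (W : X → Y1 × Y2 × Z → ℝ) (hW : ∀ x, IsPMF (W x))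
    (hR₁ : 0 ≤ R₁) (hR₂ : 0 ≤ R₂)
    (c : ∀ n : ℕ, WTBCCode X Y1 Y2 Z n R₁ R₂) (hc : ∀ n, (c n).valid)
    (qZ : Z → ℝ) (hqZ : IsPMF qZ) (γ : ℝ) (hγ : 0 < γ)
    (hach : ∀ᶠ n in Filter.atTop,
      tvDist ((c n).margMZM W) (targetMZM qZ n R₁ R₂) ≤ Real.exp (-(n * γ))) :
    (∀ n, ((c n).toGPBC W).valid) ∧
    (∀ᶠ n in Filter.atTop,
      tvDist ((c n).joint W) (((c n).toGPBC W).joint qZ (condY12givenXZ W))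
        ≤ Real.exp (-(n * γ))) ∧
    Filter.Tendsto (fun n => ((c n).toGPBC W).errProb qZ (condY12givenXZ W))
      Filter.atTop (nhds 0) := by
  classical
  -- Part (1): validity of the induced GPBC codes
  have hval : ∀ n, ((c n).toGPBC W).valid := by
    intro n z m
    have hXne : Nonempty (Fin n → X) := by
      by_contra h
      rw [not_nonempty_iff] at h
      have h1 := (hc n (⟨⟨0, msg_pos n R₁⟩, ⟨0, msg_pos n R₂⟩⟩)).2
      rw [Finset.univ_eq_empty, Finset.sum_empty] at h1
      exact one_ne_zero h1.symm
    refine ⟨fun x => enc_nonneg hW (hc n) z m x, ?_⟩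
    show ∑ x, inducedGPBCEnc W (c n) z m x = 1
    unfold inducedGPBCEnc
    by_cases h : 0 < ∑ x', (c n).margMXZ W (m, x', z)
    · simp only [if_pos h]
      rw [← Finset.sum_div, div_self (ne_of_gt h)]
    · simp only [if_neg h]
      rw [Finset.sum_const, Finset.card_univ, nsmul_eq_mul]
      exact mul_inv_cancel₀ (Nat.cast_ne_zero.mpr Fintype.card_ne_zero)
  -- key quantitative estimate
  have key : ∀ N : ℕ, 1 ≤ N →
      tvDist ((c N).margMZM W) (targetMZM qZ N R₁ R₂) ≤ Real.exp (-(N * γ)) →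
      tvDist ((c N).joint W) (((c N).toGPBC W).joint qZ (condY12givenXZ W))
          ≤ Real.exp (-(N * γ)) ∧
        ((c N).toGPBC W).errProb qZ (condY12givenXZ W) ≤ 4 * Real.exp (-(N * γ)) := by
    intro N hN hTV
    have hXne : Nonempty (Fin N → X) := by
      by_contra h
      rw [not_nonempty_iff] at h
      have h1 := (hc N (⟨⟨0, msg_pos N R₁⟩, ⟨0, msg_pos N R₂⟩⟩)).2
      rw [Finset.univ_eq_empty, Finset.sum_empty] at h1
      exact one_ne_zero h1.symm
    haveI : Nonempty X := ⟨Classical.arbitrary (Fin N → X) ⟨0, hN⟩⟩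
    haveI hYZ : Nonempty (Y1 × Y2 × Z) := by
      by_contra h
      rw [not_nonempty_iff] at h
      have h1 := (hW (Classical.arbitrary X)).2
      rw [Finset.univ_eq_empty, Finset.sum_empty] at h1
      exact one_ne_zero h1.symm
    haveI : Nonempty Y1 := ⟨(Classical.arbitrary (Y1 × Y2 × Z)).1⟩
    haveI : Nonempty Y2 := ⟨(Classical.arbitrary (Y1 × Y2 × Z)).2.1⟩
    have hQpt : ∀ (m : Msg N R₁ × Msg N R₂) (x : Fin N → X) (y1 : Fin N → Y1)
        (y2 : Fin N → Y2) (z : Fin N → Z) (mh : Msg N R₁ × Msg N R₂),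
        ((c N).toGPBC W).joint qZ (condY12givenXZ W) (m, x, y1, y2, z, mh)
          = (∏ i, qZ (z i))
            * (((Fintype.card (Msg N R₁) : ℝ) * (Fintype.card (Msg N R₂) : ℝ))⁻¹)
            * inducedGPBCEnc W (c N) z m x
            * (∏ i, condY12givenXZ W (x i) (z i) (y1 i, y2 i))
            * (if (c N).dec1 y1 = mh.1 ∧ (c N).dec2 y2 = mh.2 then 1 else 0) := by
      intro m x y1 y2 z mh
      rfl
    have hfac : ∀ (a t g p ind : ℝ),
        a * g * p * ind - t * g * p * ind = (a - t) * g * p * ind := by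
      intros; ring
    have hdiff : ∀ (m : Msg N R₁ × Msg N R₂) (x : Fin N → X) (y1 : Fin N → Y1)
        (y2 : Fin N → Y2) (z : Fin N → Z) (mh : Msg N R₁ × Msg N R₂),
        |(c N).joint W (m, x, y1, y2, z, mh)
            - ((c N).toGPBC W).joint qZ (condY12givenXZ W) (m, x, y1, y2, z, mh)|
          = |(∑ x', (c N).margMXZ W (m, x', z)) - (∏ i, qZ (z i))
                * (((Fintype.card (Msg N R₁) : ℝ) * (Fintype.card (Msg N R₂) : ℝ))⁻¹)|
            * inducedGPBCEnc W (c N) z m x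
            * (∏ i, condY12givenXZ W (x i) (z i) (y1 i, y2 i))
            * (if (c N).dec1 y1 = mh.1 ∧ (c N).dec2 y2 = mh.2 then 1 else 0) := by
      intro m x y1 y2 z mh
      have hite : (0 : ℝ)
          ≤ (if (c N).dec1 y1 = mh.1 ∧ (c N).dec2 y2 = mh.2 then (1 : ℝ) else 0) := by
        split <;> norm_num
      rw [joint_decomp hW (hc N) m x y1 y2 z mh, hQpt m x y1 y2 z mh, hfac,
        abs_mul, abs_mul, abs_mul,
        abs_of_nonneg (enc_nonneg hW (hc N) z m x),
        abs_of_nonneg (Finset.prod_nonneg fun i _ => cond_nonneg hW (x i) (z i) (y1 i, y2 i)),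
        abs_of_nonneg hite]
    have hsum : ∑ ω, |(c N).joint W ω
            - ((c N).toGPBC W).joint qZ (condY12givenXZ W) ω|
        = ∑ m : Msg N R₁ × Msg N R₂, ∑ z : Fin N → Z,
            |(∑ x', (c N).margMXZ W (m, x', z)) - (∏ i, qZ (z i))
              * (((Fintype.card (Msg N R₁) : ℝ) * (Fintype.card (Msg N R₂) : ℝ))⁻¹)| := by
      rw [sum_prod6 (fun ω => |(c N).joint W ω
        - ((c N).toGPBC W).joint qZ (condY12givenXZ W) ω|)]
      refine Finset.sum_congr rfl fun m _ => ?_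
      calc ∑ x : Fin N → X, ∑ y1 : Fin N → Y1, ∑ y2 : Fin N → Y2, ∑ z : Fin N → Z,
            ∑ mh : Msg N R₁ × Msg N R₂,
            |(c N).joint W (m, x, y1, y2, z, mh)
              - ((c N).toGPBC W).joint qZ (condY12givenXZ W) (m, x, y1, y2, z, mh)|
          = ∑ x : Fin N → X, ∑ y1 : Fin N → Y1, ∑ y2 : Fin N → Y2, ∑ z : Fin N → Z,
            ∑ mh : Msg N R₁ × Msg N R₂,
              |(∑ x', (c N).margMXZ W (m, x', z)) - (∏ i, qZ (z i))
                  * (((Fintype.card (Msg N R₁) : ℝ) * (Fintype.card (Msg N R₂) : ℝ))⁻¹)|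
                * inducedGPBCEnc W (c N) z m x
                * (∏ i, condY12givenXZ W (x i) (z i) (y1 i, y2 i))
                * (if (c N).dec1 y1 = mh.1 ∧ (c N).dec2 y2 = mh.2 then 1 else 0) := by
            refine Finset.sum_congr rfl fun x _ => Finset.sum_congr rfl fun y1 _ =>
              Finset.sum_congr rfl fun y2 _ => Finset.sum_congr rfl fun z _ =>
              Finset.sum_congr rfl fun mh _ => hdiff m x y1 y2 z mh
        _ = ∑ z : Fin N → Z, |(∑ x', (c N).margMXZ W (m, x', z)) - (∏ i, qZ (z i))
              * (((Fintype.card (Msg N R₁) : ℝ) * (Fintype.card (Msg N R₂) : ℝ))⁻¹)| :=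
            collapse_aux hW (fun z x => inducedGPBCEnc W (c N) z m x)
              (fun z => (hval N z m).2)
              (fun z => |(∑ x', (c N).margMXZ W (m, x', z)) - (∏ i, qZ (z i))
                * (((Fintype.card (Msg N R₁) : ℝ) * (Fintype.card (Msg N R₂) : ℝ))⁻¹)|)
              (c N).dec1 (c N).dec2
    have hAbound : ∀ (m : Msg N R₁ × Msg N R₂) (z : Fin N → Z),
        |(∑ x', (c N).margMXZ W (m, x', z)) - (∏ i, qZ (z i))
            * (((Fintype.card (Msg N R₁) : ℝ) * (Fintype.card (Msg N R₂) : ℝ))⁻¹)|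
          ≤ ∑ mh, |(c N).margMZM W (m, z, mh) - targetMZM qZ N R₁ R₂ (m, z, mh)| := by
      intro m z
      rw [A_eq_sum_margMZM, ← target_sum qZ m z, ← Finset.sum_sub_distrib]
      exact Finset.abs_sum_le_sum_abs _ _
    have h2tv : ∑ m : Msg N R₁ × Msg N R₂, ∑ z : Fin N → Z,
          ∑ mh, |(c N).margMZM W (m, z, mh) - targetMZM qZ N R₁ R₂ (m, z, mh)|
        = 2 * tvDist ((c N).margMZM W) (targetMZM qZ N R₁ R₂) := by
      rw [← two_tv]
      exact (sum_prod3 fun ω => |(c N).margMZM W ω - targetMZM qZ N R₁ R₂ ω|).symm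
    have hsum_le : ∑ ω, |(c N).joint W ω
          - ((c N).toGPBC W).joint qZ (condY12givenXZ W) ω|
        ≤ 2 * Real.exp (-(N * γ)) := by
      rw [hsum]
      calc ∑ m : Msg N R₁ × Msg N R₂, ∑ z : Fin N → Z,
            |(∑ x', (c N).margMXZ W (m, x', z)) - (∏ i, qZ (z i))
              * (((Fintype.card (Msg N R₁) : ℝ) * (Fintype.card (Msg N R₂) : ℝ))⁻¹)|
          ≤ ∑ m : Msg N R₁ × Msg N R₂, ∑ z : Fin N → Z,
              ∑ mh, |(c N).margMZM W (m, z, mh) - targetMZM qZ N R₁ R₂ (m, z, mh)| :=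
            Finset.sum_le_sum fun m _ => Finset.sum_le_sum fun z _ => hAbound m z
        _ = 2 * tvDist ((c N).margMZM W) (targetMZM qZ N R₁ R₂) := h2tv
        _ ≤ 2 * Real.exp (-(N * γ)) := by linarith
    constructor
    · unfold tvDist
      linarith [hsum_le]
    · -- error probability bound
      have herrP : ∑ ω : (Msg N R₁ × Msg N R₂) × (Fin N → X) × (Fin N → Y1) × (Fin N → Y2)
            × (Fin N → Z) × (Msg N R₁ × Msg N R₂),
            (if ω.2.2.2.2.2 ≠ ω.1 then (c N).joint W ω else 0)
          = ∑ m : Msg N R₁ × Msg N R₂, ∑ mh : Msg N R₁ × Msg N R₂, ∑ z : Fin N → Z,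
              (if mh ≠ m then (c N).margMZM W (m, z, mh) else 0) := by
        rw [sum_prod6 (fun ω : (Msg N R₁ × Msg N R₂) × (Fin N → X) × (Fin N → Y1)
          × (Fin N → Y2) × (Fin N → Z) × (Msg N R₁ × Msg N R₂) =>
          if ω.2.2.2.2.2 ≠ ω.1 then (c N).joint W ω else 0)]
        refine Finset.sum_congr rfl fun m _ => ?_
        calc ∑ x : Fin N → X, ∑ y1 : Fin N → Y1, ∑ y2 : Fin N → Y2, ∑ z : Fin N → Z,
              ∑ mh : Msg N R₁ × Msg N R₂,
              (if mh ≠ m then (c N).joint W (m, x, y1, y2, z, mh) else 0)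
            = ∑ mh : Msg N R₁ × Msg N R₂, ∑ x : Fin N → X, ∑ y1 : Fin N → Y1,
                ∑ y2 : Fin N → Y2, ∑ z : Fin N → Z,
                (if mh ≠ m then (c N).joint W (m, x, y1, y2, z, mh) else 0) :=
              sum_rot5 _
          _ = ∑ mh : Msg N R₁ × Msg N R₂, ∑ z : Fin N → Z, ∑ x : Fin N → X,
                ∑ y1 : Fin N → Y1, ∑ y2 : Fin N → Y2,
                (if mh ≠ m then (c N).joint W (m, x, y1, y2, z, mh) else 0) :=
              Finset.sum_congr rfl fun mh _ => sum_rot4 _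
          _ = ∑ mh : Msg N R₁ × Msg N R₂, ∑ z : Fin N → Z,
                (if mh ≠ m then (c N).margMZM W (m, z, mh) else 0) := by
              refine Finset.sum_congr rfl fun mh _ => Finset.sum_congr rfl fun z _ => ?_
              by_cases h : mh = m
              · simp [h]
              · simp only [if_pos h]
                rfl

      have herrP_le : ∑ ω : (Msg N R₁ × Msg N R₂) × (Fin N → X) × (Fin N → Y1)
            × (Fin N → Y2) × (Fin N → Z) × (Msg N R₁ × Msg N R₂),
            (if ω.2.2.2.2.2 ≠ ω.1 then (c N).joint W ω else 0)
          ≤ 2 * Real.exp (-(N * γ)) := by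
        rw [herrP]
        have hb : ∀ (m mh : Msg N R₁ × Msg N R₂) (z : Fin N → Z),
            (if mh ≠ m then (c N).margMZM W (m, z, mh) else 0)
              ≤ |(c N).margMZM W (m, z, mh) - targetMZM qZ N R₁ R₂ (m, z, mh)| := by
          intro m mh z
          by_cases h : mh = m
          · rw [if_neg (not_not_intro h)]
            exact abs_nonneg _
          · rw [if_pos h]
            have ht : targetMZM qZ N R₁ R₂ (m, z, mh) = 0 := by
              simp only [targetMZM]
              rw [if_neg h]
              ring
            rw [ht, sub_zero, abs_of_nonneg (margMZM_nonneg hW (hc N) _)]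
        calc ∑ m : Msg N R₁ × Msg N R₂, ∑ mh : Msg N R₁ × Msg N R₂, ∑ z : Fin N → Z,
              (if mh ≠ m then (c N).margMZM W (m, z, mh) else 0)
            ≤ ∑ m : Msg N R₁ × Msg N R₂, ∑ mh : Msg N R₁ × Msg N R₂, ∑ z : Fin N → Z,
                |(c N).margMZM W (m, z, mh) - targetMZM qZ N R₁ R₂ (m, z, mh)| :=
              Finset.sum_le_sum fun m _ => Finset.sum_le_sum fun mh _ =>
                Finset.sum_le_sum fun z _ => hb m mh z
          _ = ∑ m : Msg N R₁ × Msg N R₂, ∑ z : Fin N → Z, ∑ mh : Msg N R₁ × Msg N R₂,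
                |(c N).margMZM W (m, z, mh) - targetMZM qZ N R₁ R₂ (m, z, mh)| :=
              Finset.sum_congr rfl fun m _ => Finset.sum_comm
          _ = 2 * tvDist ((c N).margMZM W) (targetMZM qZ N R₁ R₂) := h2tv
          _ ≤ 2 * Real.exp (-(N * γ)) := by linarith
      have hQP : ∀ ω : (Msg N R₁ × Msg N R₂) × (Fin N → X) × (Fin N → Y1)
            × (Fin N → Y2) × (Fin N → Z) × (Msg N R₁ × Msg N R₂),
          (if ω.2.2.2.2.2 ≠ ω.1 then ((c N).toGPBC W).joint qZ (condY12givenXZ W) ω else 0)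
            ≤ (if ω.2.2.2.2.2 ≠ ω.1 then (c N).joint W ω else 0)
              + |(c N).joint W ω - ((c N).toGPBC W).joint qZ (condY12givenXZ W) ω| := by
        intro ω
        by_cases h : ω.2.2.2.2.2 ≠ ω.1
        · rw [if_pos h, if_pos h]
          have h1 := le_abs_self (((c N).toGPBC W).joint qZ (condY12givenXZ W) ω
            - (c N).joint W ω)
          rw [abs_sub_comm] at h1
          linarith
        · rw [if_neg h, if_neg h]
          positivity
      unfold GPBCCode.errProb
      calc ∑ ω : (Msg N R₁ × Msg N R₂) × (Fin N → X) × (Fin N → Y1) × (Fin N → Y2)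
            × (Fin N → Z) × (Msg N R₁ × Msg N R₂),
            (if ω.2.2.2.2.2 ≠ ω.1 then ((c N).toGPBC W).joint qZ (condY12givenXZ W) ω else 0)
          ≤ ∑ ω : (Msg N R₁ × Msg N R₂) × (Fin N → X) × (Fin N → Y1) × (Fin N → Y2)
              × (Fin N → Z) × (Msg N R₁ × Msg N R₂),
              ((if ω.2.2.2.2.2 ≠ ω.1 then (c N).joint W ω else 0)
                + |(c N).joint W ω - ((c N).toGPBC W).joint qZ (condY12givenXZ W) ω|) :=
            Finset.sum_le_sum fun ω _ => hQP ω
        _ = (∑ ω : (Msg N R₁ × Msg N R₂) × (Fin N → X) × (Fin N → Y1) × (Fin N → Y2)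
              × (Fin N → Z) × (Msg N R₁ × Msg N R₂),
              (if ω.2.2.2.2.2 ≠ ω.1 then (c N).joint W ω else 0))
            + ∑ ω, |(c N).joint W ω
                - ((c N).toGPBC W).joint qZ (condY12givenXZ W) ω| :=
            Finset.sum_add_distrib
        _ ≤ 2 * Real.exp (-(N * γ)) + 2 * Real.exp (-(N * γ)) := add_le_add herrP_le hsum_le
        _ = 4 * Real.exp (-(N * γ)) := by ring
  refine ⟨hval, ?_, ?_⟩
  · filter_upwards [hach, Filter.eventually_ge_atTop 1] with n h1 h2
    exact (key n h2 h1).1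
  · have h0 : ∀ n, 0 ≤ ((c n).toGPBC W).errProb qZ (condY12givenXZ W) := by
      intro n
      refine Finset.sum_nonneg fun ω _ => ?_
      split
      · simp only [GPBCCode.joint]
        refine mul_nonneg (mul_nonneg (mul_nonneg (mul_nonneg ?_ ?_) ?_) ?_) ?_
        · exact Finset.prod_nonneg fun i _ => hqZ.1 _
        · exact inv_nonneg.mpr (mul_nonneg (Nat.cast_nonneg _) (Nat.cast_nonneg _))
        · exact (hval n _ _).1 _
        · exact Finset.prod_nonneg fun i _ => cond_nonneg hW _ _ _
        · split <;> norm_num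
      · exact le_rfl
    have hexp : Filter.Tendsto (fun n : ℕ => 4 * Real.exp (-(n * γ)))
        Filter.atTop (nhds 0) := by
      have h1 : Filter.Tendsto (fun n : ℕ => (n : ℝ) * γ) Filter.atTop Filter.atTop :=
        Filter.Tendsto.atTop_mul_const' hγ tendsto_natCast_atTop_atTop
      have h2 : Filter.Tendsto (fun n : ℕ => -((n : ℝ) * γ)) Filter.atTop Filter.atBot :=
        Filter.tendsto_neg_atBot_iff.mpr h1
      have h3 := Real.tendsto_exp_atBot.comp h2
      simpa using h3.const_mul (4 : ℝ)
    refine squeeze_zero' (Filter.Eventually.of_forall h0) ?_ hexp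
    filter_upwards [hach, Filter.eventually_ge_atTop 1] with n h1 h2
    exact (key n h2 h1).2

end
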